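/- arXiv:2105.06996 — 5 statements merged into one kernel-verified Lean document; each statement's English description precedes it below -/
import Mathlib

section
/- Let w be a nonempty finite word (list) over the two symbols {b, c}. Define the operator A_w by starting from the diagonal matrix C' and applying, for each symbol of w read in order, the superoperator ∇ (for symbol b) or ∇_C (for symbol c). Then: (i) every entry of A_w with respect to the computational basis is real; (ii) A_w has trace zero; (iii) if the length of w is even then A_w is Hermitian (A_wᴴ = A_w), while if the length of w is odd then A_w is skew-Hermitian (A_wᴴ = −A_w). -/
open Matrix Asymptotics

noncomputable section

abbrev Bits (n : ℕ) := Fin n → Bool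

/-- `x` with bit `j` flipped. -/
def flipBit {n : ℕ} (j : Fin n) (x : Bits n) : Bits n := Function.update x j (!x j)

/-- The bit-flip operator `X_j`. -/
def Xop {n : ℕ} (j : Fin n) : Matrix (Bits n) (Bits n) ℂ :=
  fun x y => if y = flipBit j x then 1 else 0

/-- The transverse-field mixing Hamiltonian `B = ∑ⱼ Xⱼ`. -/
def Bop (n : ℕ) : Matrix (Bits n) (Bits n) ℂ := ∑ j : Fin n, Xop j

/-- The cost Hamiltonian: diagonal matrix with entries `c x`. -/
def Cop {n : ℕ} (c : Bits n → ℝ) : Matrix (Bits n) (Bits n) ℂ :=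
  Matrix.diagonal fun x => (c x : ℂ)

/-- The gradient superoperator `∇A = [B, A]`. -/
def gradB {n : ℕ} (A : Matrix (Bits n) (Bits n) ℂ) : Matrix (Bits n) (Bits n) ℂ :=
  Bop n * A - A * Bop n

/-- The gradient with respect to the cost Hamiltonian `∇_C A = [C, A]`. -/
def gradC {n : ℕ} (c : Bits n → ℝ) (A : Matrix (Bits n) (Bits n) ℂ) :
    Matrix (Bits n) (Bits n) ℂ :=
  Cop c * A - A * Cop c

/-- The uniform superposition state `|s⟩`, every entry `(2^n)^{-1/2}`. -/
def sVec (n : ℕ) : Bits n → ℂ := fun _ => ((Real.sqrt (2 ^ n))⁻¹ : ℝ)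

/-- Initial-state expectation value `⟨A⟩₀ = ⟨s|A|s⟩`. -/
def expect0 {n : ℕ} (A : Matrix (Bits n) (Bits n) ℂ) : ℂ :=
  star (sVec n) ⬝ᵥ (A *ᵥ sVec n)

/-- Partial cost difference `∂ⱼc(x) = c(x⁽ʲ⁾) − c(x)`. -/
def pd {n : ℕ} (c : Bits n → ℝ) (j : Fin n) (x : Bits n) : ℝ := c (flipBit j x) - c x

/-- Cost divergence `dc(x) = ∑ⱼ ∂ⱼc(x)`. -/
def dcFun {n : ℕ} (c : Bits n → ℝ) (x : Bits n) : ℝ := ∑ j : Fin n, pd c j x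

/-- The two symbols of the word: `b` stands for applying `∇ = [B,·]`,
`c` stands for applying `∇_C = [C,·]`. -/
inductive GradSym : Type
  | b : GradSym
  | c : GradSym

/-- Apply the superoperators corresponding to the symbols of `w`, read in order,
starting from the matrix `A`. -/
def applyWord {n : ℕ} (c : Bits n → ℝ) (w : List GradSym)
    (A : Matrix (Bits n) (Bits n) ℂ) : Matrix (Bits n) (Bits n) ℂ :=
  w.foldl (fun M s => match s with
    | GradSym.b => gradB M
    | GradSym.c => gradC c M) A


lemma flipBit_flipBit {n : ℕ} (j : Fin n) (x : Bits n) : flipBit j (flipBit j x) = x := by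
  funext i
  by_cases h : i = j
  · subst h; simp [flipBit]
  · simp [flipBit, Function.update_of_ne h]

lemma Xop_symm {n : ℕ} (j : Fin n) (x y : Bits n) : Xop j x y = Xop j y x := by
  have h : y = flipBit j x ↔ x = flipBit j y := by
    constructor <;> intro h <;> rw [h, flipBit_flipBit]
  simp [Xop, h]

lemma star_Xop {n : ℕ} (j : Fin n) (x y : Bits n) : star (Xop j x y) = Xop j x y := by
  simp only [Xop]; split_ifs <;> simp

lemma star_Bop {n : ℕ} (x y : Bits n) : star (Bop n x y) = Bop n x y := by
  simp only [Bop, Matrix.sum_apply, star_sum, star_Xop]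

lemma Bop_herm {n : ℕ} : (Bop n)ᴴ = Bop n := by
  ext x y
  simp only [Matrix.conjTranspose_apply]
  rw [star_Bop]
  simp only [Bop, Matrix.sum_apply]
  exact Finset.sum_congr rfl fun j _ => Xop_symm j y x

lemma star_Cop {n : ℕ} (c : Bits n → ℝ) (x y : Bits n) : star (Cop c x y) = Cop c x y := by
  simp only [Cop, Matrix.diagonal]
  by_cases h : x = y <;> simp [h, Matrix.of_apply]

lemma Cop_herm {n : ℕ} (c : Bits n → ℝ) : (Cop c)ᴴ = Cop c := by
  ext x y
  simp only [Matrix.conjTranspose_apply]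
  rw [star_Cop]
  simp only [Cop, Matrix.diagonal, Matrix.of_apply]
  by_cases h : x = y <;> simp [h, Ne.symm, eq_comm]

/-- entrywise-real predicate -/
def realMat {n : ℕ} (A : Matrix (Bits n) (Bits n) ℂ) : Prop :=
  ∀ x y, star (A x y) = A x y

lemma realMat_gradB {n : ℕ} {A : Matrix (Bits n) (Bits n) ℂ} (hA : realMat A) :
    realMat (gradB A) := by
  simp only [realMat] at hA
  intro x y
  simp only [gradB, Matrix.sub_apply, Matrix.mul_apply, star_sub, star_sum, star_mul',
    star_Bop, hA]

lemma realMat_gradC {n : ℕ} (c : Bits n → ℝ) {A : Matrix (Bits n) (Bits n) ℂ}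
    (hA : realMat A) : realMat (gradC c A) := by
  simp only [realMat] at hA
  intro x y
  simp only [gradC, Matrix.sub_apply, Matrix.mul_apply, star_sub, star_sum, star_mul',
    star_Cop, hA]

lemma gradB_herm {n : ℕ} {A : Matrix (Bits n) (Bits n) ℂ} {ε : ℂ} (hA : Aᴴ = ε • A) :
    (gradB A)ᴴ = (-ε) • gradB A := by
  simp only [gradB, Matrix.conjTranspose_sub, Matrix.conjTranspose_mul, Bop_herm, hA,
    Matrix.smul_mul, Matrix.mul_smul, smul_sub, neg_smul]
  abel

lemma gradC_herm {n : ℕ} (c : Bits n → ℝ) {A : Matrix (Bits n) (Bits n) ℂ} {ε : ℂ}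
    (hA : Aᴴ = ε • A) : (gradC c A)ᴴ = (-ε) • gradC c A := by
  simp only [gradC, Matrix.conjTranspose_sub, Matrix.conjTranspose_mul, Cop_herm, hA,
    Matrix.smul_mul, Matrix.mul_smul, smul_sub, neg_smul]
  abel

lemma trace_gradB {n : ℕ} (A : Matrix (Bits n) (Bits n) ℂ) :
    Matrix.trace (gradB A) = 0 := by
  simp [gradB, Matrix.trace_sub, Matrix.trace_mul_comm (Bop n) A]

lemma trace_gradC {n : ℕ} (c : Bits n → ℝ) (A : Matrix (Bits n) (Bits n) ℂ) :
    Matrix.trace (gradC c A) = 0 := by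
  simp [gradC, Matrix.trace_sub, Matrix.trace_mul_comm (Cop c) A]

lemma applyWord_cons {n : ℕ} (c : Bits n → ℝ) (s : GradSym) (w : List GradSym)
    (A : Matrix (Bits n) (Bits n) ℂ) :
    applyWord c (s :: w) A = applyWord c w (match s with
      | GradSym.b => gradB A
      | GradSym.c => gradC c A) := rfl

lemma realMat_applyWord {n : ℕ} (c : Bits n → ℝ) (w : List GradSym)
    {A : Matrix (Bits n) (Bits n) ℂ} (hA : realMat A) : realMat (applyWord c w A) := by
  induction w generalizing A with
  | nil => exact hA
  | cons s w ih =>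
    rw [applyWord_cons]
    cases s
    · exact ih (realMat_gradB hA)
    · exact ih (realMat_gradC c hA)

lemma trace_applyWord {n : ℕ} (c : Bits n → ℝ) (w : List GradSym)
    (A : Matrix (Bits n) (Bits n) ℂ) (hw : w ≠ []) :
    Matrix.trace (applyWord c w A) = 0 := by
  induction w generalizing A with
  | nil => exact absurd rfl hw
  | cons s w ih =>
    rw [applyWord_cons]
    rcases w with _ | ⟨t, w⟩
    · cases s
      · exact trace_gradB A
      · exact trace_gradC c A
    · cases s <;> exact ih _ (by simp)

lemma herm_applyWord {n : ℕ} (c : Bits n → ℝ) (w : List GradSym)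
    {A : Matrix (Bits n) (Bits n) ℂ} {ε : ℂ} (hA : Aᴴ = ε • A) :
    (applyWord c w A)ᴴ = ((-1) ^ w.length * ε) • applyWord c w A := by
  induction w generalizing A ε with
  | nil => simpa [applyWord] using hA
  | cons s w ih =>
    rw [applyWord_cons]
    have key : ∀ (B : Matrix (Bits n) (Bits n) ℂ), Bᴴ = (-ε) • B →
        (applyWord c w B)ᴴ = ((-1) ^ (s :: w).length * ε) • applyWord c w B := by
      intro B hB
      rw [ih hB]
      congr 1
      rw [List.length_cons]
      ring
    cases s
    · exact key _ (gradB_herm hA)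
    · exact key _ (gradC_herm c hA)

theorem stmt0 (n : ℕ) (hn : 1 ≤ n) (c c' : Bits n → ℝ) (w : List GradSym) (hw : w ≠ []) :
    (∀ x y : Bits n, ∃ r : ℝ, applyWord c w (Cop c') x y = (r : ℂ)) ∧
    Matrix.trace (applyWord c w (Cop c')) = 0 ∧
    (Even w.length → (applyWord c w (Cop c'))ᴴ = applyWord c w (Cop c')) ∧
    (Odd w.length → (applyWord c w (Cop c'))ᴴ = -applyWord c w (Cop c')) := by
  have hC : (Cop c')ᴴ = (1 : ℂ) • Cop c' := by rw [one_smul, Cop_herm]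
  have hreal : realMat (applyWord c w (Cop c')) :=
    realMat_applyWord c w (star_Cop c')
  have hherm := herm_applyWord c w hC
  refine ⟨fun x y => ?_, trace_applyWord c w _ hw, fun he => ?_, fun ho => ?_⟩
  · exact ⟨(applyWord c w (Cop c') x y).re,
      ((Complex.conj_eq_iff_re).mp (hreal x y)).symm⟩
  · rw [hherm, he.neg_one_pow, mul_one, one_smul]
  · rw [hherm, ho.neg_one_pow, mul_one, neg_one_smul]
end
end

section
/- For every cost function c : (Fin n → Bool) → ℝ with cost Hamiltonian C: (i) ⟨∇_C ∇C⟩₀ = (2/2^n)·∑_x c(x)·dc(x) = −(1/2^n)·∑_x ∑_{j} (∂_j c(x))², and in particular this quantity is a nonpositive real number; (ii) ⟨∇_C ∇²C⟩₀ = 0, ⟨∇_C² ∇C⟩₀ = 0, and ⟨∇ ∇_C ∇C⟩₀ = 0. -/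
open Matrix Asymptotics

noncomputable section

lemma flipEqIff {n : ℕ} (j : Fin n) (x y : Bits n) :
    y = flipBit j x ↔ x = flipBit j y := by
  constructor <;> rintro rfl <;> rw [flipBit_flipBit]

lemma sum_flip {n : ℕ} (j : Fin n) (f : Bits n → ℝ) :
    ∑ x : Bits n, f (flipBit j x) = ∑ x : Bits n, f x :=
  Fintype.sum_bijective (flipBit j) (Function.Involutive.bijective (flipBit_flipBit j)) _ _
    (fun _ => rfl)

lemma expect0_eq {n : ℕ} (A : Matrix (Bits n) (Bits n) ℂ) :
    expect0 A = (((2 ^ n : ℝ)⁻¹ : ℝ) : ℂ) * ∑ x : Bits n, ∑ y : Bits n, A x y := by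
  have ha : (((Real.sqrt (2 ^ n))⁻¹ : ℝ) : ℂ) * (((Real.sqrt (2 ^ n))⁻¹ : ℝ) : ℂ)
      = (((2 ^ n : ℝ)⁻¹ : ℝ) : ℂ) := by
    norm_cast
    rw [← mul_inv, Real.mul_self_sqrt (by positivity)]
  simp only [expect0, dotProduct, Matrix.mulVec, sVec]
  rw [Finset.mul_sum]
  refine Finset.sum_congr rfl fun x _ => ?_
  rw [Finset.mul_sum, Finset.mul_sum]
  refine Finset.sum_congr rfl fun y _ => ?_
  simp only [sVec, Pi.star_apply, RCLike.star_def, Complex.conj_ofReal]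
  rw [← ha]; ring

lemma Bop_apply {n : ℕ} (x y : Bits n) :
    Bop n x y = ∑ j : Fin n, if y = flipBit j x then (1 : ℂ) else 0 := by
  simp only [Bop, Matrix.sum_apply]; rfl

lemma Bop_row {n : ℕ} (x : Bits n) : ∑ y : Bits n, Bop n x y = (n : ℂ) := by
  simp only [Bop_apply]
  rw [Finset.sum_comm]
  simp [Finset.sum_ite_eq']

lemma Bop_col {n : ℕ} (y : Bits n) : ∑ x : Bits n, Bop n x y = (n : ℂ) := by
  simp only [Bop_apply]
  rw [Finset.sum_comm]
  have h1 : ∀ j : Fin n, (∑ z : Bits n, if y = flipBit j z then (1 : ℂ) else 0) = 1 := by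
    intro j
    rw [Finset.sum_congr rfl fun z _ => if_congr (flipEqIff j z y) rfl rfl]
    simp [Finset.sum_ite_eq']
  simp [h1]

lemma Bop_sum_mul {n : ℕ} (x : Bits n) (g : Bits n → ℂ) :
    ∑ y : Bits n, Bop n x y * g y = ∑ j : Fin n, g (flipBit j x) := by
  simp only [Bop_apply, Finset.sum_mul]
  rw [Finset.sum_comm]
  refine Finset.sum_congr rfl fun j _ => ?_
  simp [ite_mul, Finset.sum_ite_eq']

lemma Bop_transpose {n : ℕ} : (Bop n)ᵀ = Bop n := by
  ext x y
  simp only [Matrix.transpose_apply, Bop_apply]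
  exact Finset.sum_congr rfl fun j _ => if_congr (flipEqIff j x y).symm rfl rfl

lemma Cop_transpose {n : ℕ} (c : Bits n → ℝ) : (Cop c)ᵀ = Cop c := by
  simp [Cop, Matrix.diagonal_transpose]

lemma gradB_transpose {n : ℕ} (M : Matrix (Bits n) (Bits n) ℂ) :
    (gradB M)ᵀ = -gradB Mᵀ := by
  simp only [gradB, Matrix.transpose_sub, Matrix.transpose_mul, Bop_transpose, neg_sub]

lemma gradC_transpose {n : ℕ} (c : Bits n → ℝ) (M : Matrix (Bits n) (Bits n) ℂ) :
    (gradC c M)ᵀ = -gradC c Mᵀ := by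
  simp only [gradC, Matrix.transpose_sub, Matrix.transpose_mul, Cop_transpose, neg_sub]

lemma gradB_neg {n : ℕ} (M : Matrix (Bits n) (Bits n) ℂ) : gradB (-M) = -gradB M := by
  simp [gradB, Matrix.mul_neg, Matrix.neg_mul, neg_sub]; abel

lemma gradC_neg {n : ℕ} (c : Bits n → ℝ) (M : Matrix (Bits n) (Bits n) ℂ) :
    gradC c (-M) = -gradC c M := by
  simp [gradC, Matrix.mul_neg, Matrix.neg_mul, neg_sub]; abel

lemma expect0_transpose {n : ℕ} (A : Matrix (Bits n) (Bits n) ℂ) :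
    expect0 Aᵀ = expect0 A := by
  rw [expect0_eq, expect0_eq]
  simp only [Matrix.transpose_apply]
  exact congrArg _ Finset.sum_comm

lemma expect0_antisym {n : ℕ} (A : Matrix (Bits n) (Bits n) ℂ) (h : Aᵀ = -A) :
    expect0 A = 0 := by
  have h1 : expect0 A = - expect0 A := by
    conv_lhs => rw [← expect0_transpose, h]
    rw [expect0_eq, expect0_eq]
    simp [Finset.sum_neg_distrib, mul_neg]
  have h2 : (2 : ℂ) * expect0 A = 0 := by linear_combination h1
  have := mul_eq_zero.mp h2
  simpa using this

lemma expect0_gradB {n : ℕ} (A : Matrix (Bits n) (Bits n) ℂ) :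
    expect0 (gradB A) = 0 := by
  rw [expect0_eq]
  have h1 : ∑ x : Bits n, ∑ y : Bits n, (Bop n * A) x y
      = (n : ℂ) * ∑ z : Bits n, ∑ y : Bits n, A z y := by
    calc ∑ x : Bits n, ∑ y : Bits n, (Bop n * A) x y
        = ∑ x : Bits n, ∑ z : Bits n, Bop n x z * ∑ y : Bits n, A z y := by
          refine Finset.sum_congr rfl fun x _ => ?_
          simp only [Matrix.mul_apply]
          rw [Finset.sum_comm]
          exact Finset.sum_congr rfl fun z _ => by rw [Finset.mul_sum]
      _ = ∑ z : Bits n, (∑ x : Bits n, Bop n x z) * ∑ y : Bits n, A z y := by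
          rw [Finset.sum_comm]
          exact Finset.sum_congr rfl fun z _ => (Finset.sum_mul _ _ _).symm
      _ = (n : ℂ) * ∑ z : Bits n, ∑ y : Bits n, A z y := by
          rw [Finset.mul_sum]
          exact Finset.sum_congr rfl fun z _ => by rw [Bop_col]
  have h2 : ∑ x : Bits n, ∑ y : Bits n, (A * Bop n) x y
      = (n : ℂ) * ∑ z : Bits n, ∑ y : Bits n, A z y := by
    calc ∑ x : Bits n, ∑ y : Bits n, (A * Bop n) x y
        = ∑ x : Bits n, ∑ z : Bits n, A x z * ∑ y : Bits n, Bop n z y := by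
          refine Finset.sum_congr rfl fun x _ => ?_
          simp only [Matrix.mul_apply]
          rw [Finset.sum_comm]
          exact Finset.sum_congr rfl fun z _ => by rw [Finset.mul_sum]
      _ = ∑ x : Bits n, ∑ z : Bits n, A x z * (n : ℂ) := by
          exact Finset.sum_congr rfl fun x _ =>
            Finset.sum_congr rfl fun z _ => by rw [Bop_row]
      _ = (n : ℂ) * ∑ z : Bits n, ∑ y : Bits n, A z y := by
          rw [Finset.mul_sum]
          refine Finset.sum_congr rfl fun x _ => ?_
          rw [Finset.mul_sum]
          exact Finset.sum_congr rfl fun z _ => mul_comm _ _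
  simp only [gradB, Matrix.sub_apply, Finset.sum_sub_distrib, h1, h2, sub_self, mul_zero]

lemma main_row {n : ℕ} (c : Bits n → ℝ) (x : Bits n) :
    ∑ y : Bits n, gradC c (gradB (Cop c)) x y
      = ∑ j : Fin n, -(((c (flipBit j x) : ℂ) - (c x : ℂ)) ^ 2) := by
  have := Bop_sum_mul x (fun y => -(((c y : ℂ) - (c x : ℂ)) ^ 2))
  rw [← this]
  refine Finset.sum_congr rfl fun y _ => ?_
  simp only [gradC, gradB, Cop, Matrix.mul_sub, Matrix.sub_mul, Matrix.sub_apply,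
    Matrix.diagonal_mul, Matrix.mul_diagonal]
  ring

lemma main_eq {n : ℕ} (c : Bits n → ℝ) :
    expect0 (gradC c (gradB (Cop c)))
      = ((-(1 / 2 ^ n) * ∑ x : Bits n, ∑ j : Fin n, (pd c j x) ^ 2 : ℝ) : ℂ) := by
  rw [expect0_eq]
  rw [Finset.sum_congr rfl fun x _ => main_row c x]
  have hb : ∀ x : Bits n, ∀ j : Fin n,
      -(((c (flipBit j x) : ℂ) - (c x : ℂ)) ^ 2) = ((-(pd c j x ^ 2) : ℝ) : ℂ) := by
    intro x j; push_cast [pd]; ring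
  simp_rw [hb]
  norm_cast
  simp only [Finset.sum_neg_distrib]
  push_cast
  ring

lemma real_identity {n : ℕ} (c : Bits n → ℝ) :
    (2 / 2 ^ n * ∑ x : Bits n, c x * dcFun c x : ℝ)
      = -(1 / 2 ^ n) * ∑ x : Bits n, ∑ j : Fin n, (pd c j x) ^ 2 := by
  have key : ∑ x : Bits n, ∑ j : Fin n,
      ((pd c j x) ^ 2 + 2 * (c x * pd c j x)) = 0 := by
    have h0 : ∀ x (j : Fin n), (pd c j x) ^ 2 + 2 * (c x * pd c j x)
        = c (flipBit j x) ^ 2 - c x ^ 2 := by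
      intro x j; simp only [pd]; ring
    simp_rw [h0]
    rw [Finset.sum_comm]
    refine Finset.sum_eq_zero fun j _ => ?_
    rw [Finset.sum_sub_distrib, sum_flip j (fun x => c x ^ 2), sub_self]
  have hexp : ∑ x : Bits n, ∑ j : Fin n, ((pd c j x) ^ 2 + 2 * (c x * pd c j x))
      = (∑ x : Bits n, ∑ j : Fin n, (pd c j x) ^ 2)
        + 2 * ∑ x : Bits n, c x * dcFun c x := by
    simp_rw [Finset.sum_add_distrib, dcFun, Finset.mul_sum]
  rw [hexp] at key
  have h2 : (0:ℝ) < (2:ℝ) ^ n := by positivity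
  have h4 : ∑ x : Bits n, c x * dcFun c x
      = -(∑ x : Bits n, ∑ j : Fin n, (pd c j x) ^ 2) / 2 := by linarith
  rw [h4]
  ring

theorem stmt3 (n : ℕ) (hn : 1 ≤ n) (c : Bits n → ℝ) :
    (expect0 (gradC c (gradB (Cop c)))
        = ((2 / 2 ^ n * ∑ x : Bits n, c x * dcFun c x : ℝ) : ℂ)) ∧
    (expect0 (gradC c (gradB (Cop c)))
        = ((-(1 / 2 ^ n) * ∑ x : Bits n, ∑ j : Fin n, (pd c j x) ^ 2 : ℝ) : ℂ)) ∧
    ((2 / 2 ^ n * ∑ x : Bits n, c x * dcFun c x : ℝ) ≤ 0) ∧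
    expect0 (gradC c (gradB (gradB (Cop c)))) = 0 ∧
    expect0 (gradC c (gradC c (gradB (Cop c)))) = 0 ∧
    expect0 (gradB (gradC c (gradB (Cop c)))) = 0 := by
  refine ⟨?_, ?_, ?_, ?_, ?_, ?_⟩
  · rw [main_eq, real_identity]
  · exact main_eq c
  · rw [real_identity]
    have h1 : (0:ℝ) ≤ ∑ x : Bits n, ∑ j : Fin n, (pd c j x) ^ 2 := by positivity
    have h2 : (0:ℝ) ≤ 1 / 2 ^ n := by positivity
    nlinarith
  · apply expect0_antisym
    simp [gradC_transpose, gradB_transpose, Cop_transpose, gradC_neg, gradB_neg]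
  · apply expect0_antisym
    simp [gradC_transpose, gradB_transpose, Cop_transpose, gradC_neg, gradB_neg]
  · exact expect0_gradB _
end
end

section
/- (First order in the mixing angle, arbitrary phase angle.) For every cost function c : (Fin n → Bool) → ℝ, every real γ, and every bitstring x: the function β ↦ P₁(x;γ,β) is differentiable at β = 0 with derivative −(2/2^n)·∑_{j} sin(γ·∂_j c(x)); consequently the function β ↦ ⟨C⟩₁(γ,β) is differentiable at β = 0 with derivative −(2/2^n)·∑_x c(x)·∑_{j} sin(γ·∂_j c(x)). -/
open Matrix Asymptotics

noncomputable section

/-- The QAOA₁ operator `Q(γ,β) = exp(−iβB)·exp(−iγC)`. -/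
def Qaoa1 {n : ℕ} (c : Bits n → ℝ) (γ β : ℝ) : Matrix (Bits n) (Bits n) ℂ :=
  NormedSpace.exp ((-(Complex.I * (β : ℂ))) • Bop n) *
    NormedSpace.exp ((-(Complex.I * (γ : ℂ))) • Cop c)

/-- Probability of measuring the bitstring `x` in the QAOA₁ state. -/
def P1 {n : ℕ} (c : Bits n → ℝ) (x : Bits n) (γ β : ℝ) : ℝ :=
  ‖(Qaoa1 c γ β *ᵥ sVec n) x‖ ^ 2

/-- The QAOA₁ cost expectation value `⟨C⟩₁(γ,β)`. -/
def expC1 {n : ℕ} (c : Bits n → ℝ) (γ β : ℝ) : ℝ :=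
  (star (Qaoa1 c γ β *ᵥ sVec n) ⬝ᵥ (Cop c *ᵥ (Qaoa1 c γ β *ᵥ sVec n))).re

lemma expc_re (θ : ℝ) : (Complex.exp (-(Complex.I * (θ:ℂ)))).re = Real.cos θ := by
  rw [show -(Complex.I * (θ:ℂ)) = ((-θ : ℝ) : ℂ) * Complex.I by push_cast; ring,
    Complex.exp_ofReal_mul_I_re, Real.cos_neg]

lemma expc_im (θ : ℝ) : (Complex.exp (-(Complex.I * (θ:ℂ)))).im = -Real.sin θ := by
  rw [show -(Complex.I * (θ:ℂ)) = ((-θ : ℝ) : ℂ) * Complex.I by push_cast; ring,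
    Complex.exp_ofReal_mul_I_im, Real.sin_neg]

lemma wre (θ t : ℝ) : (Complex.exp (-(Complex.I * (θ:ℂ))) * (t:ℂ)).re = Real.cos θ * t := by
  rw [Complex.mul_re, expc_re, expc_im]; simp

lemma wim (θ t : ℝ) : (Complex.exp (-(Complex.I * (θ:ℂ))) * (t:ℂ)).im = -Real.sin θ * t := by
  rw [Complex.mul_im, expc_re, expc_im]; simp

lemma hasDerivAt_entry (n : ℕ) (w : Bits n → ℂ) (x : Bits n) :
    HasDerivAt (fun β : ℝ => (NormedSpace.exp ((-(Complex.I * (β:ℂ))) • Bop n) *ᵥ w) x)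
      ((-Complex.I) * (Bop n *ᵥ w) x) 0 := by
  letI : NormedRing (Matrix (Bits n) (Bits n) ℂ) := Matrix.linftyOpNormedRing
  letI : NormedAlgebra ℝ (Matrix (Bits n) (Bits n) ℂ) := Matrix.linftyOpNormedAlgebra
  set A : Matrix (Bits n) (Bits n) ℂ := (-Complex.I) • Bop n with hA
  have h1 : HasDerivAt (fun u : ℝ => NormedSpace.exp (u • A))
      (NormedSpace.exp ((0:ℝ) • A) * A) 0 := hasDerivAt_exp_smul_const (𝕂 := ℝ) _ 0
  have hre : (NormedSpace.exp : Matrix (Bits n) (Bits n) ℂ → _) = NormedSpace.exp :=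
    rfl
  have hsm : ∀ β : ℝ, β • A = (-(Complex.I * (β:ℂ))) • Bop n := by
    intro β
    rw [hA, ← smul_assoc]
    congr 1
    rw [Complex.real_smul]
    ring
  have h2 : HasDerivAt (fun β : ℝ => NormedSpace.exp ((-(Complex.I * (β:ℂ))) • Bop n)) A 0 := by
    have : NormedSpace.exp ((0:ℝ) • A) * A = A := by
      rw [zero_smul, NormedSpace.exp_zero, one_mul]
    rw [this] at h1
    convert h1 using 2 with β
    rw [hre, hsm]
  let L0 : Matrix (Bits n) (Bits n) ℂ →ₗ[ℂ] ℂ :=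
    { toFun := fun M => (M *ᵥ w) x
      map_add' := by intro M N; simp [Matrix.add_mulVec]
      map_smul' := by intro a M; simp [Matrix.smul_mulVec] }
  let L : Matrix (Bits n) (Bits n) ℂ →L[ℝ] ℂ :=
    LinearMap.toContinuousLinearMap (L0.restrictScalars ℝ)
  have h3 := (L.hasFDerivAt.comp_hasDerivAt 0 h2)
  have hLA : L A = (-Complex.I) * (Bop n *ᵥ w) x := by
    show ((((-Complex.I) • Bop n) *ᵥ w) x) = _
    rw [Matrix.smul_mulVec]
    simp
  have h3 := h3.congr_deriv hLA
  exact h3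

lemma w_apply (n : ℕ) (c : Bits n → ℝ) (γ : ℝ) (y : Bits n) :
    (NormedSpace.exp ((-(Complex.I * (γ:ℂ))) • Cop c) *ᵥ sVec n) y
      = Complex.exp (-(Complex.I * ((γ * c y : ℝ) : ℂ))) * ((Real.sqrt (2 ^ n))⁻¹ : ℝ) := by
  have hdiag : (-(Complex.I * (γ:ℂ))) • Cop c
      = Matrix.diagonal (fun y => -(Complex.I * ((γ * c y : ℝ) : ℂ))) := by
    ext a b
    by_cases h : a = b <;>
      simp [Cop, Matrix.diagonal_apply, h, Matrix.smul_apply] <;> push_cast <;> ring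
  rw [hdiag, Matrix.exp_diagonal, Matrix.mulVec_diagonal]
  congr 1
  rw [Pi.coe_exp, ← Complex.exp_eq_exp_ℂ]

lemma Bop_mulVec (n : ℕ) (w : Bits n → ℂ) (x : Bits n) :
    (Bop n *ᵥ w) x = ∑ j : Fin n, w (flipBit j x) := by
  simp only [Bop, Matrix.mulVec, dotProduct, Matrix.sum_apply, Finset.sum_mul, Xop,
    ite_mul, one_mul, zero_mul]
  rw [Finset.sum_comm]
  simp

theorem stmt10 (n : ℕ) (hn : 1 ≤ n) (c : Bits n → ℝ) (γ : ℝ) :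
    (∀ x : Bits n,
      HasDerivAt (fun β => P1 c x γ β)
        (-(2 / 2 ^ n) * ∑ j : Fin n, Real.sin (γ * pd c j x)) 0) ∧
    HasDerivAt (fun β => expC1 c γ β)
      (-(2 / 2 ^ n) * ∑ x : Bits n, c x * ∑ j : Fin n, Real.sin (γ * pd c j x)) 0 := by
  set r : ℝ := (Real.sqrt (2 ^ n))⁻¹ with hr
  have h2n : (0:ℝ) < 2 ^ n := by positivity
  have hr2 : r * r = ((2:ℝ) ^ n)⁻¹ := by
    rw [hr, ← mul_inv, Real.mul_self_sqrt h2n.le]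
  have hP : ∀ x : Bits n,
      HasDerivAt (fun β => P1 c x γ β)
        (-(2 / 2 ^ n) * ∑ j : Fin n, Real.sin (γ * pd c j x)) 0 := by
    intro x
    set w : Bits n → ℂ := NormedSpace.exp ((-(Complex.I * (γ:ℂ))) • Cop c) *ᵥ sVec n with hw
    set f : ℝ → ℂ := fun β => (NormedSpace.exp ((-(Complex.I * (β:ℂ))) • Bop n) *ᵥ w) x with hf
    have hder : HasDerivAt f ((-Complex.I) * (Bop n *ᵥ w) x) 0 := hasDerivAt_entry n w x
    have hP1 : (fun β => P1 c x γ β)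
        = fun β => (f β).re * (f β).re + (f β).im * (f β).im := by
      funext β
      rw [P1, Qaoa1, ← Matrix.mulVec_mulVec, Complex.sq_norm,
        Complex.normSq_apply]
    have hf0 : f 0 = w x := by
      have : (-(Complex.I * ((0:ℝ):ℂ))) • Bop n = 0 := by
        norm_num
      rw [hf]
      simp only [this, NormedSpace.exp_zero, Matrix.one_mulVec]
    set f' : ℂ := (-Complex.I) * (Bop n *ᵥ w) x with hf'
    have hre : HasDerivAt (fun β => (f β).re) f'.re 0 :=
      Complex.reCLM.hasFDerivAt.comp_hasDerivAt 0 hder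
    have him : HasDerivAt (fun β => (f β).im) f'.im 0 :=
      Complex.imCLM.hasFDerivAt.comp_hasDerivAt 0 hder
    have hD := (hre.mul hre).add (him.mul him)
    rw [hP1]
    refine hD.congr_deriv (Eq.symm ?_)
    rw [hf0]
    -- now a real-number identity
    have hwx : ∀ y, w y = Complex.exp (-(Complex.I * ((γ * c y : ℝ):ℂ))) * (r:ℂ) :=
      fun y => w_apply n c γ y
    have hBw : (Bop n *ᵥ w) x = ∑ j : Fin n, w (flipBit j x) := Bop_mulVec n w x
    have hfre : f'.re = ∑ j : Fin n, -Real.sin (γ * c (flipBit j x)) * r := by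
      have h1 : f'.re = (∑ j : Fin n, w (flipBit j x)).im := by
        rw [hf', hBw, Complex.mul_re]; simp
      rw [h1, Complex.im_sum]
      exact Finset.sum_congr rfl fun j _ => by rw [hwx, wim]
    have hfim : f'.im = ∑ j : Fin n, -(Real.cos (γ * c (flipBit j x)) * r) := by
      have h1 : f'.im = -(∑ j : Fin n, w (flipBit j x)).re := by
        rw [hf', hBw, Complex.mul_im]; simp
      rw [h1, Complex.re_sum, ← Finset.sum_neg_distrib]
      exact Finset.sum_congr rfl fun j _ => by rw [hwx, wre]
    have hwxre : (w x).re = Real.cos (γ * c x) * r := by rw [hwx, wre]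
    have hwxim : (w x).im = -Real.sin (γ * c x) * r := by rw [hwx, wim]
    rw [hfre, hfim, hwxre, hwxim]
    rw [show -(2 / (2:ℝ) ^ n) = -(2 * (r * r)) by rw [hr2]; ring]
    simp only [neg_mul, mul_neg, neg_neg, Finset.sum_mul, Finset.mul_sum,
      ← Finset.sum_neg_distrib, ← Finset.sum_add_distrib]
    refine Finset.sum_congr rfl fun j _ => ?_
    rw [show γ * pd c j x = γ * c (flipBit j x) - γ * c x by rw [pd]; ring, Real.sin_sub]
    ring
  refine ⟨hP, ?_⟩
  have hexp : (fun β => expC1 c γ β) = fun β => ∑ x : Bits n, c x * P1 c x γ β := by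
    funext β
    rw [expC1, dotProduct, Complex.re_sum]
    refine Finset.sum_congr rfl fun x _ => ?_
    rw [Cop, Matrix.mulVec_diagonal]
    set z := (Qaoa1 c γ β *ᵥ sVec n) x
    rw [P1]
    show ((star z) * ((c x : ℂ) * z)).re = _
    rw [Complex.star_def,
      show (starRingEnd ℂ) z * ((c x : ℂ) * z) = (c x : ℂ) * (z * (starRingEnd ℂ) z) by ring,
      Complex.mul_conj, ← Complex.ofReal_mul, Complex.ofReal_re,
      Complex.sq_norm]
  rw [hexp]
  have := HasDerivAt.fun_sum (fun x (_ : x ∈ Finset.univ) => (hP x).const_mul (c x))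
  refine this.congr_deriv (Eq.symm ?_)
  rw [Finset.mul_sum]
  refine Finset.sum_congr rfl fun x _ => ?_
  ring
end
end

section
/- (Exact QAOA₁ for the Hamming-weight ramp.) Let α be a nonzero real number and let c(x) := α·|x| where |x| is the number of indices j with x j = true, with cost Hamiltonian C. Then for all real γ, β: ⟨C⟩₁(γ,β) = α·n/2 + (α·n/2)·sin(α·γ)·sin(2β). -/
open Matrix Asymptotics

noncomputable section

namespace Q17
variable {m : Type*} [Fintype m] [DecidableEq m]

lemma pow_idem (P : Matrix m m ℂ) (hP : P * P = P) : ∀ k : ℕ, P ^ (k + 1) = P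
  | 0 => pow_one P
  | k + 1 => by rw [pow_succ, pow_idem P hP k, hP]

lemma exp_idem (P : Matrix m m ℂ) (hP : P * P = P) (c : ℂ) :
    NormedSpace.exp (c • P) = 1 + (Complex.exp c - 1) • P := by
  letI : SeminormedRing (Matrix m m ℂ) := Matrix.linftyOpSemiNormedRing
  letI : NormedRing (Matrix m m ℂ) := Matrix.linftyOpNormedRing
  letI : NormedAlgebra ℂ (Matrix m m ℂ) := Matrix.linftyOpNormedAlgebra
  have hs : Summable fun k : ℕ => ((k.factorial : ℂ))⁻¹ • (c • P) ^ k :=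
    NormedSpace.expSeries_summable' (𝕂 := ℂ) (c • P)
  have hexp : Complex.exp c = 1 + ∑' k : ℕ, (((k+1).factorial : ℂ))⁻¹ * c ^ (k + 1) := by
    have hsc : Summable fun k : ℕ => ((k.factorial : ℂ))⁻¹ • c ^ k :=
      NormedSpace.expSeries_summable' (𝕂 := ℂ) c
    rw [Complex.exp_eq_exp_ℂ]
    simp only [NormedSpace.exp_eq_tsum ℂ]
    rw [Summable.tsum_eq_zero_add hsc]
    simp [smul_eq_mul]
  simp only [NormedSpace.exp_eq_tsum ℂ]
  rw [Summable.tsum_eq_zero_add hs]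
  have h1 : ∀ k : ℕ, (((k+1).factorial : ℂ))⁻¹ • (c • P) ^ (k + 1)
      = ((((k+1).factorial : ℂ))⁻¹ * c ^ (k + 1)) • P := by
    intro k
    rw [smul_pow, pow_idem P hP k, smul_smul]
  simp only [h1]
  have hsc2 : Summable fun k : ℕ => (((k+1).factorial : ℂ))⁻¹ * c ^ (k + 1) := by
    have hsc : Summable fun k : ℕ => ((k.factorial : ℂ))⁻¹ * c ^ k := by
      simpa [smul_eq_mul] using NormedSpace.expSeries_summable' (𝕂 := ℂ) c
    exact hsc.comp_injective (add_left_injective 1)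
  rw [Summable.tsum_smul_const hsc2]
  rw [hexp]
  simp [sub_smul]

lemma expand_mul (a b : ℂ) (P Q : Matrix m m ℂ) (h : P * Q = 0) :
    (1 + a • P) * (1 + b • Q) = 1 + a • P + b • Q := by
  simp only [mul_add, add_mul, mul_one, one_mul, smul_mul_smul_comm, h, smul_zero]
  abel

lemma exp_invol (X : Matrix m m ℂ) (hX : X * X = 1) (c : ℂ) :
    NormedSpace.exp (c • X) = Complex.cosh c • 1 + Complex.sinh c • X := by
  have hP : ((2⁻¹ : ℂ) • (1 + X)) * ((2⁻¹ : ℂ) • (1 + X)) = (2⁻¹ : ℂ) • (1 + X) := by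
    rw [smul_mul_smul_comm]
    simp only [mul_add, add_mul, mul_one, one_mul, hX]
    match_scalars <;> norm_num
  have hQ : ((2⁻¹ : ℂ) • (1 - X)) * ((2⁻¹ : ℂ) • (1 - X)) = (2⁻¹ : ℂ) • (1 - X) := by
    rw [smul_mul_smul_comm]
    simp only [mul_sub, sub_mul, mul_one, one_mul, hX]
    match_scalars <;> norm_num
  have hPQ : ((2⁻¹ : ℂ) • (1 + X)) * ((2⁻¹ : ℂ) • (1 - X)) = 0 := by
    rw [smul_mul_smul_comm]
    simp only [mul_sub, add_mul, mul_one, one_mul, hX]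
    match_scalars <;> norm_num
  have hQP : ((2⁻¹ : ℂ) • (1 - X)) * ((2⁻¹ : ℂ) • (1 + X)) = 0 := by
    rw [smul_mul_smul_comm]
    simp only [mul_add, sub_mul, mul_one, one_mul, hX]
    match_scalars <;> norm_num
  have hcomm : Commute (c • ((2⁻¹ : ℂ) • (1 + X))) ((-c) • ((2⁻¹ : ℂ) • (1 - X))) := by
    unfold Commute SemiconjBy
    rw [smul_mul_smul_comm, hPQ, smul_zero, smul_mul_smul_comm, hQP, smul_zero]
  have hsplit : c • X = c • ((2⁻¹ : ℂ) • (1 + X)) + (-c) • ((2⁻¹ : ℂ) • (1 - X)) := by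
    module
  rw [hsplit, Matrix.exp_add_of_commute _ _ hcomm,
    exp_idem _ hP, exp_idem _ hQ, expand_mul _ _ _ _ hPQ]
  simp only [Complex.cosh, Complex.sinh]
  module

variable {n : ℕ}

lemma flipBit_apply (j : Fin n) (x : Bits n) (k : Fin n) :
    flipBit j x k = if k = j then !x j else x k := by
  simp [flipBit, Function.update_apply]

lemma flipBit_comm (j k : Fin n) (x : Bits n) :
    flipBit j (flipBit k x) = flipBit k (flipBit j x) := by
  funext i
  rcases eq_or_ne j k with rfl | hjk
  · rfl
  · simp only [flipBit_apply]
    rcases eq_or_ne i j with rfl | hij <;> rcases eq_or_ne i k with rfl | hik <;>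
      simp_all [flipBit_apply]

lemma flipBit_flipBit (j : Fin n) (x : Bits n) : flipBit j (flipBit j x) = x := by
  funext i
  by_cases h : i = j
  · subst h; simp [flipBit_apply]
  · simp [flipBit_apply, h]

lemma Xop_mul_Xop (j k : Fin n) : Xop j * Xop k =
    fun x y => if y = flipBit k (flipBit j x) then 1 else 0 := by
  ext x y
  rw [Matrix.mul_apply]
  simp only [Xop, boole_mul]
  rw [Finset.sum_ite_eq' Finset.univ (flipBit j x) (fun z => if y = flipBit k z then (1:ℂ) else 0)]
  simp

lemma Xop_commute (j k : Fin n) : Commute (Xop j) (Xop k) := by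
  unfold Commute SemiconjBy
  rw [Xop_mul_Xop, Xop_mul_Xop]
  ext x y
  rw [flipBit_comm]

lemma Xop_invol (j : Fin n) : Xop j * Xop j = 1 := by
  rw [Xop_mul_Xop]
  ext x y
  simp [flipBit_flipBit, Matrix.one_apply, eq_comm]

lemma Xop_mulVec (j : Fin n) (v : Bits n → ℂ) (x : Bits n) :
    (Xop j *ᵥ v) x = v (flipBit j x) := by
  simp [Xop, Matrix.mulVec, dotProduct, ite_mul, Finset.sum_ite_eq', eq_comm]

lemma prod_update_point (h : Fin n → Bool → ℂ) (x : Bits n) (j : Fin n) (b : Bool) :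
    ∏ k, h k (Function.update x j b k) = h j b * ∏ k ∈ Finset.univ \ {j}, h k (x k) := by
  have e : ∀ k, h k (Function.update x j b k)
      = Function.update (fun k => h k (x k)) j (h j b) k := by
    intro k
    rcases eq_or_ne k j with rfl | hk
    · simp
    · simp [Function.update_apply, hk]
  rw [Finset.prod_congr rfl (fun k _ => e k)]
  exact Finset.prod_update_of_mem (Finset.mem_univ j) _ _

lemma exp_mix_mulVec (c : ℂ) (s : Finset (Fin n)) (g : Fin n → Bool → ℂ) :
    NormedSpace.exp (c • ∑ j ∈ s, Xop j) *ᵥ (fun x => ∏ j, g j (x j))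
      = fun x => ∏ j, if j ∈ s then
          Complex.cosh c * g j (x j) + Complex.sinh c * g j (!x j) else g j (x j) := by
  induction s using Finset.induction with
  | empty => simp [NormedSpace.exp_zero]
  | insert j₀ s hj₀ ih =>
    rw [Finset.sum_insert hj₀, smul_add]
    have hcomm : Commute (c • Xop j₀) (c • ∑ j ∈ s, Xop j) :=
      ((Commute.sum_right s _ _ (fun k _ => Xop_commute j₀ k)).smul_left c).smul_right c
    rw [Matrix.exp_add_of_commute _ _ hcomm, ← Matrix.mulVec_mulVec, ih,
      exp_invol (Xop j₀) (Xop_invol j₀) c]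
    set h : Fin n → Bool → ℂ := fun j b => if j ∈ s then
      Complex.cosh c * g j b + Complex.sinh c * g j (!b) else g j b with hh
    funext x
    rw [Matrix.add_mulVec, Matrix.smul_mulVec, Matrix.smul_mulVec,
      Matrix.one_mulVec]
    simp only [Pi.add_apply, Pi.smul_apply, smul_eq_mul, Xop_mulVec]
    have hv1 : ∏ j, h j (x j) = h j₀ (x j₀) * ∏ k ∈ Finset.univ \ {j₀}, h k (x k) :=
      Finset.prod_eq_mul_prod_sdiff_singleton_of_mem (Finset.mem_univ j₀) _
    have hv2 : ∏ j, h j (flipBit j₀ x j) = h j₀ (!x j₀) * ∏ k ∈ Finset.univ \ {j₀}, h k (x k) := by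
      have := prod_update_point h x j₀ (!x j₀)
      simpa [flipBit] using this
    have hrhs : ∏ j, (if j ∈ insert j₀ s then
          Complex.cosh c * g j (x j) + Complex.sinh c * g j (!x j) else g j (x j))
        = (Complex.cosh c * g j₀ (x j₀) + Complex.sinh c * g j₀ (!x j₀))
            * ∏ k ∈ Finset.univ \ {j₀}, h k (x k) := by
      rw [Finset.prod_eq_mul_prod_sdiff_singleton_of_mem (Finset.mem_univ j₀)]
      congr 1
      · simp
      · refine Finset.prod_congr rfl fun k hk => ?_
        have hkj : k ≠ j₀ := by simpa using (Finset.mem_sdiff.mp hk).2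
        simp [hh, Finset.mem_insert, hkj]
    rw [hv1, hv2, hrhs]
    have hgj₀ : ∀ b, h j₀ b = g j₀ b := by intro b; simp [hh, hj₀]
    rw [hgj₀, hgj₀]
    ring

end Q17

open Q17 Complex in
theorem stmt17 (n : ℕ) (hn : 1 ≤ n) (α : ℝ) (hα : α ≠ 0) (γ β : ℝ) :
    expC1 (fun x : Bits n =>
        α * ((Finset.univ.filter fun j : Fin n => x j = true).card : ℝ)) γ β
      = α * n / 2 + α * n / 2 * Real.sin (α * γ) * Real.sin (2 * β) := by
  set c : Bits n → ℝ := fun x =>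
    α * ((Finset.univ.filter fun j : Fin n => x j = true).card : ℝ) with hc
  set r : ℝ := (Real.sqrt (2 ^ n))⁻¹ with hr
  set t : ℝ := α * γ with ht
  set E : Bool → ℂ := fun b => Complex.exp (-(Complex.I * (γ : ℂ)) * ((α : ℂ) * (if b = true then 1 else 0))) with hE
  set A : Bool → ℂ := fun b =>
    Complex.cosh (-(Complex.I * (β : ℂ))) * E b + Complex.sinh (-(Complex.I * (β : ℂ))) * E (!b)
    with hA
  set M : Bool → ℂ := fun b => (starRingEnd ℂ) (A b) * A b with hM
  have hcx : ∀ x : Bits n, ((c x : ℝ) : ℂ) = (α : ℂ) * ∑ j, (if x j = true then (1:ℂ) else 0) := by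
    intro x
    rw [hc]
    have hcard : ((Finset.filter (fun j => x j = true) Finset.univ).card : ℂ)
        = ∑ j, (if x j = true then (1:ℂ) else 0) := by
      rw [Finset.card_filter]
      push_cast [apply_ite (Nat.cast : ℕ → ℂ)]
      norm_num
    push_cast
    rw [hcard]
  -- Step 1: the diagonal exponential
  have hCexp : NormedSpace.exp ((-(Complex.I * (γ : ℂ))) • Cop c)
      = Matrix.diagonal fun x => Complex.exp (-(Complex.I * (γ : ℂ)) * (c x : ℂ)) := by
    rw [Cop, ← Matrix.diagonal_smul, Matrix.exp_diagonal]
    have hfun : NormedSpace.exp ((-(Complex.I * (γ : ℂ))) • fun x : Bits n => (c x : ℂ))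
        = fun x : Bits n => Complex.exp (-(Complex.I * (γ : ℂ)) * (c x : ℂ)) := by
      rw [Pi.exp_def]
      funext x
      rw [Pi.smul_apply, smul_eq_mul, ← Complex.exp_eq_exp_ℂ]
    rw [hfun]
  have hphi : (NormedSpace.exp ((-(Complex.I * (γ : ℂ))) • Cop c)) *ᵥ sVec n
      = (r : ℂ) • fun x : Bits n => ∏ j, E (x j) := by
    rw [hCexp]
    funext x
    have hsplit : -(Complex.I * (γ : ℂ)) * (c x : ℂ)
        = ∑ j, (-(Complex.I * (γ : ℂ)) * ((α : ℂ) * (if x j = true then 1 else 0))) := by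
      rw [hcx x, Finset.mul_sum, Finset.mul_sum]
    simp only [Pi.smul_apply, smul_eq_mul, Matrix.mulVec_diagonal, sVec]
    rw [hsplit, Complex.exp_sum]
    simp only [hE]
    rw [mul_comm, hr]
  -- Step 2: the full QAOA state
  have hψ : Qaoa1 c γ β *ᵥ sVec n = fun x : Bits n => (r : ℂ) * ∏ j, A (x j) := by
    rw [Qaoa1, ← Matrix.mulVec_mulVec, hphi, Matrix.mulVec_smul, Bop, exp_mix_mulVec]
    funext x
    simp only [Pi.smul_apply, smul_eq_mul, Finset.mem_univ, if_true, ite_true, hA]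
  -- values of the trig factors
  have hcoshv : Complex.cosh (-(Complex.I * (β : ℂ))) = ((Real.cos β : ℝ) : ℂ) := by
    have h : -(Complex.I * (β : ℂ)) = ((-β : ℝ) : ℂ) * Complex.I := by push_cast; ring
    rw [h, Complex.cosh_mul_I, ← Complex.ofReal_cos, Real.cos_neg]
  have hsinhv : Complex.sinh (-(Complex.I * (β : ℂ))) = -(Complex.I * ((Real.sin β : ℝ) : ℂ)) := by
    have h : -(Complex.I * (β : ℂ)) = ((-β : ℝ) : ℂ) * Complex.I := by push_cast; ring
    rw [h, Complex.sinh_mul_I, ← Complex.ofReal_sin, Real.sin_neg]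
    push_cast; ring
  have hEf : E false = 1 := by simp [hE]
  have hEt : E true = ((Real.cos t : ℝ) : ℂ) - ((Real.sin t : ℝ) : ℂ) * Complex.I := by
    have h : -(Complex.I * (γ : ℂ)) * (α : ℂ) = ((-t : ℝ) : ℂ) * Complex.I := by
      rw [ht]; push_cast; ring
    simp only [hE, eq_self_iff_true, if_true, mul_one]
    rw [h, Complex.exp_mul_I, ← Complex.ofReal_cos, ← Complex.ofReal_sin, Real.cos_neg,
      Real.sin_neg]
    push_cast; ring
  have hAt : A true = ((Real.cos β * Real.cos t : ℝ) : ℂ)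
      + ((-(Real.cos β * Real.sin t) - Real.sin β : ℝ) : ℂ) * Complex.I := by
    simp only [hA, Bool.not_true]
    rw [hcoshv, hsinhv, hEt, hEf]
    push_cast; ring
  have hAf : A false = ((Real.cos β - Real.sin β * Real.sin t : ℝ) : ℂ)
      + ((-(Real.sin β * Real.cos t) : ℝ) : ℂ) * Complex.I := by
    simp only [hA, Bool.not_false]
    rw [hcoshv, hsinhv, hEt, hEf]
    push_cast
    linear_combination (Complex.sin (β : ℂ) * Complex.sin ((t : ℝ) : ℂ)) * Complex.I_sq
  have hMt : M true = ((1 + Real.sin t * Real.sin (2*β) : ℝ) : ℂ) := by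
    simp only [hM]
    rw [hAt, mul_comm, Complex.mul_conj, Complex.normSq_add_mul_I, Complex.ofReal_inj]
    linear_combination (Real.cos β)^2 * Real.sin_sq_add_cos_sq t + Real.sin_sq_add_cos_sq β
      - Real.sin t * Real.sin_two_mul β
  have hMf : M false = ((1 - Real.sin t * Real.sin (2*β) : ℝ) : ℂ) := by
    simp only [hM]
    rw [hAf, mul_comm, Complex.mul_conj, Complex.normSq_add_mul_I, Complex.ofReal_inj]
    linear_combination (Real.sin β)^2 * Real.sin_sq_add_cos_sq t + Real.sin_sq_add_cos_sq β
      + Real.sin t * Real.sin_two_mul β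
  have hM2 : M true + M false = 2 := by rw [hMt, hMf]; push_cast; ring
  -- star of the state entries
  have hstar : ∀ x : Bits n, star ((r : ℂ) * ∏ j, A (x j))
      = (r : ℂ) * ∏ j, (starRingEnd ℂ) (A (x j)) := by
    intro x
    rw [show (star ((r : ℂ) * ∏ j, A (x j)))
        = (starRingEnd ℂ) ((r : ℂ) * ∏ j, A (x j)) from rfl, _root_.map_mul, map_prod,
      Complex.conj_ofReal]
  -- the inner per-j sum
  have hinner : ∀ j : Fin n, ∑ x : Bits n, (if x j = true then (1:ℂ) else 0) * ∏ k, M (x k)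
      = M true * 2 ^ (n-1) := by
    intro j
    set f : Fin n → Bool → ℂ :=
      Function.update (fun _ : Fin n => M) j (fun b => (if b = true then (1:ℂ) else 0) * M b)
      with hf
    have hpoint : ∀ x : Bits n,
        (if x j = true then (1:ℂ) else 0) * ∏ k, M (x k) = ∏ k, f k (x k) := by
      intro x
      rw [Finset.prod_eq_mul_prod_sdiff_singleton_of_mem (Finset.mem_univ j) (fun k => f k (x k)),
        Finset.prod_eq_mul_prod_sdiff_singleton_of_mem (Finset.mem_univ j) (fun k => M (x k))]
      have h1 : f j (x j) = (if x j = true then (1:ℂ) else 0) * M (x j) := by simp [hf]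
      have h2 : ∏ k ∈ Finset.univ \ {j}, f k (x k) = ∏ k ∈ Finset.univ \ {j}, M (x k) := by
        refine Finset.prod_congr rfl fun k hk => ?_
        have hkj : k ≠ j := by simpa using (Finset.mem_sdiff.mp hk).2
        simp [hf, Function.update_apply, hkj]
      rw [h1, h2]; ring
    simp only [hpoint]
    rw [← Fintype.prod_sum f]
    have hval : ∀ k, (∑ b, f k b) = Function.update (fun _ : Fin n => (2:ℂ)) j (M true) k := by
      intro k
      rcases eq_or_ne k j with rfl | hk
      · simp [hf, Fintype.sum_bool]
      · have h1 : f k = M := by simp [hf, Function.update_apply, hk]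
        rw [h1, Function.update_apply, if_neg hk, Fintype.sum_bool]
        exact hM2
    rw [Finset.prod_congr rfl (fun k _ => hval k),
      Finset.prod_update_of_mem (Finset.mem_univ j), Finset.prod_const]
    have hcard : (Finset.univ \ {j}).card = n - 1 := by
      rw [Finset.card_sdiff_of_subset (Finset.subset_univ _), Finset.card_univ, Fintype.card_fin,
        Finset.card_singleton]
    rw [hcard]
  -- the total
  have hkey : star (Qaoa1 c γ β *ᵥ sVec n) ⬝ᵥ (Cop c *ᵥ (Qaoa1 c γ β *ᵥ sVec n))
      = ((α * n / 2 + α * n / 2 * Real.sin t * Real.sin (2*β) : ℝ) : ℂ) := by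
    rw [hψ, dotProduct]
    have hterm : ∀ x : Bits n,
        (star fun x : Bits n => (r : ℂ) * ∏ j, A (x j)) x
          * ((Cop c *ᵥ fun x : Bits n => (r : ℂ) * ∏ j, A (x j)) x)
        = (α : ℂ) * (r : ℂ)^2 * ∑ j, ((if x j = true then (1:ℂ) else 0) * ∏ k, M (x k)) := by
      intro x
      rw [Pi.star_apply, hstar x, Cop, Matrix.mulVec_diagonal, hcx x]
      have hprod : (∏ j, (starRingEnd ℂ) (A (x j))) * (∏ j, A (x j)) = ∏ k, M (x k) := by
        rw [← Finset.prod_mul_distrib]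
      rw [← Finset.sum_mul, ← hprod]
      ring
    rw [Finset.sum_congr rfl (fun x _ => hterm x), ← Finset.mul_sum, Finset.sum_comm]
    rw [Finset.sum_congr rfl (fun j (_ : j ∈ Finset.univ) => hinner j)]
    rw [Finset.sum_const, Finset.card_univ, Fintype.card_fin, nsmul_eq_mul, hMt]
    have hrr : r^2 = ((2:ℝ)^n)⁻¹ := by
      rw [hr, inv_pow, Real.sq_sqrt (by positivity)]
    have h2n : (2:ℝ)^n = 2 * 2^(n-1) := by
      rw [← pow_succ']
      congr 1
      omega
    have req : α * ((2:ℝ)^n)⁻¹ * (n * ((1 + Real.sin t * Real.sin (2*β)) * 2^(n-1)))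
        = α * n / 2 + α * n / 2 * Real.sin t * Real.sin (2*β) := by
      rw [h2n]
      have hne : (2:ℝ)^(n-1) ≠ 0 := by positivity
      field_simp
    calc (α : ℂ) * (r : ℂ)^2 * ((n : ℂ) * (((1 + Real.sin t * Real.sin (2*β) : ℝ) : ℂ) * 2^(n-1)))
        = ((α * ((2:ℝ)^n)⁻¹ * (n * ((1 + Real.sin t * Real.sin (2*β)) * 2^(n-1))) : ℝ) : ℂ) := by
          rw [← hrr]; push_cast; ring
      _ = _ := by rw [req]
  show (star (Qaoa1 c γ β *ᵥ sVec n) ⬝ᵥ (Cop c *ᵥ (Qaoa1 c γ β *ᵥ sVec n))).re = _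
  rw [hkey, Complex.ofReal_re, ht]
end
end

section
/- (QAOA beats random guessing.) For every cost function c : (Fin n → Bool) → ℝ that is not constant, there exist real γ, β such that ⟨C⟩₁(γ,β) > (1/2^n)·∑_x c(x), and there exist real γ', β' such that ⟨C⟩₁(γ',β') < (1/2^n)·∑_x c(x). -/
open Matrix Asymptotics

noncomputable section

namespace QP

attribute [local instance] Matrix.linftyOpNormedAddCommGroup Matrix.linftyOpNormedRing
  Matrix.linftyOpNormedAlgebra

variable {n : ℕ} (c : Bits n → ℝ) (ε : ℝ)

/-! ### basic combinatorics -/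

lemma flipBit_flipBit (j : Fin n) (x : Bits n) : flipBit j (flipBit j x) = x := by
  funext i
  by_cases h : i = j <;> simp [flipBit, Function.update, h]

lemma const_of_flip (h : ∀ (j : Fin n) (x : Bits n), c (flipBit j x) = c x) :
    ∀ x y : Bits n, c x = c y := by
  suffices H : ∀ s : Finset (Fin n), ∀ x y : Bits n, (∀ i, x i ≠ y i → i ∈ s) → c x = c y by
    intro x y; exact H Finset.univ x y fun i _ => Finset.mem_univ i
  intro s
  induction s using Finset.induction_on with
  | empty =>
    intro x y hxy
    have hxy' : x = y := funext fun i => by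
      by_contra hne; exact Finset.notMem_empty i (hxy i hne)
    rw [hxy']
  | @insert a t ha ih =>
    intro x y hxy
    by_cases hxa : x a = y a
    · refine ih x y fun i hi => ?_
      rcases Finset.mem_insert.1 (hxy i hi) with h1 | h1
      · exact absurd (by rw [h1]; exact hxa) hi
      · exact h1
    · have hx' : c (flipBit a x) = c x := h a x
      have hkey : c (flipBit a x) = c y := by
        refine ih (flipBit a x) y fun i hi => ?_
        by_cases hia : i = a
        · subst hia
          exfalso
          apply hi
          have hfl : flipBit i x i = !x i := by simp [flipBit]
          rw [hfl]
          cases hxb : x i <;> cases hyb : y i <;> simp_all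
        · have hfx : flipBit a x i = x i := by simp [flipBit, Function.update, hia]
          rcases Finset.mem_insert.1 (hxy i (by rwa [hfx] at hi)) with h1 | h1
          · exact absurd h1 hia
          · exact h1
      rw [← hx', hkey]

lemma exists_pd_ne (hc : ∃ x y : Bits n, c x ≠ c y) : ∃ x j, pd c j x ≠ 0 := by
  by_contra h
  push_neg at h
  obtain ⟨x, y, hxy⟩ := hc
  exact hxy (const_of_flip c (fun j x => by have := h x j; simpa [pd, sub_eq_zero] using this) x y)

lemma S_pos (hc : ∃ x y : Bits n, c x ≠ c y) :
    0 < ∑ x : Bits n, ∑ j : Fin n, (pd c j x) ^ 2 := by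
  obtain ⟨x, j, h⟩ := exists_pd_ne c hc
  refine Finset.sum_pos' (fun x _ => Finset.sum_nonneg fun j _ => sq_nonneg _)
    ⟨x, Finset.mem_univ x, Finset.sum_pos' (fun j _ => sq_nonneg _)
      ⟨j, Finset.mem_univ j, by positivity⟩⟩

/-! ### complex helpers -/

lemma re_helper1 (a b : ℝ) : ((starRingEnd ℂ) (-Complex.I * a) * (-Complex.I * b)).re = a * b := by
  simp [Complex.mul_re]

lemma re_helper2 (a b : ℝ) : ((starRingEnd ℂ) (a : ℂ) * (b : ℂ)).re = a * b := by
  simp [Complex.mul_re]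

lemma re_helper3 (a b : ℝ) : ((starRingEnd ℂ) ((a : ℂ)) * (-Complex.I * b)).re = 0 := by
  simp [Complex.mul_re]

lemma re_helper4 (a b : ℝ) : ((starRingEnd ℂ) (-Complex.I * a) * (b : ℂ)).re = 0 := by
  simp [Complex.mul_re]

lemma hasDerivAt_re_conj_mul {g h : ℝ → ℂ} {g' h' : ℂ} {t : ℝ}
    (hg : HasDerivAt g g' t) (hh : HasDerivAt h h' t) :
    HasDerivAt (fun t => ((starRingEnd ℂ) (g t) * h t).re)
      (((starRingEnd ℂ) g' * h t).re + ((starRingEnd ℂ) (g t) * h').re) t := by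
  have hgre : HasDerivAt (fun t => (g t).re) g'.re t :=
    (Complex.reCLM.hasFDerivAt (x := g t)).comp_hasDerivAt t hg
  have hgim : HasDerivAt (fun t => (g t).im) g'.im t :=
    (Complex.imCLM.hasFDerivAt (x := g t)).comp_hasDerivAt t hg
  have hhre : HasDerivAt (fun t => (h t).re) h'.re t :=
    (Complex.reCLM.hasFDerivAt (x := h t)).comp_hasDerivAt t hh
  have hhim : HasDerivAt (fun t => (h t).im) h'.im t :=
    (Complex.imCLM.hasFDerivAt (x := h t)).comp_hasDerivAt t hh
  have key := (hgre.mul hhre).add (hgim.mul hhim)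
  convert key using 1
  · rfl
  · rfl
  · funext u
    simp [Complex.mul_re]
    try ring
  · simp [Complex.mul_re]
    try ring

/-! ### matrices and derivatives -/

def rr (n : ℕ) : ℝ := (Real.sqrt (2 ^ n))⁻¹

def Am (n : ℕ) : Matrix (Bits n) (Bits n) ℂ := (-Complex.I) • Bop n
def Dm : Matrix (Bits n) (Bits n) ℂ := (-(Complex.I * (ε : ℂ))) • Cop c
def Mf (t : ℝ) : Matrix (Bits n) (Bits n) ℂ :=
  NormedSpace.exp (t • Am n) * NormedSpace.exp (t • Dm c ε)
def M1 (t : ℝ) : Matrix (Bits n) (Bits n) ℂ := Am n * Mf c ε t + Mf c ε t * Dm c ε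
def M2 (t : ℝ) : Matrix (Bits n) (Bits n) ℂ := Am n * M1 c ε t + M1 c ε t * Dm c ε
def psi (t : ℝ) : Bits n → ℂ := Mf c ε t *ᵥ sVec n
def psi1 (t : ℝ) : Bits n → ℂ := M1 c ε t *ᵥ sVec n
def psi2 (t : ℝ) : Bits n → ℂ := M2 c ε t *ᵥ sVec n

lemma hasDerivAt_Mf (t : ℝ) : HasDerivAt (Mf c ε) (M1 c ε t) t := by
  have hu := hasDerivAt_exp_smul_const' (𝕂 := ℝ) (Am n) t
  have hv := hasDerivAt_exp_smul_const (𝕂 := ℝ) (Dm c ε) t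
  have h := hu.mul hv
  refine h.congr_deriv ?_
  simp only [M1, Mf]
  simp [mul_assoc]
  rfl

lemma hasDerivAt_M1 (t : ℝ) : HasDerivAt (M1 c ε) (M2 c ε t) t :=
  ((hasDerivAt_Mf c ε t).const_mul (Am n)).add ((hasDerivAt_Mf c ε t).mul_const (Dm c ε))

/-- evaluation of `M *ᵥ s` at `x`, as a real-linear map. -/
def entryL (n : ℕ) (x : Bits n) : Matrix (Bits n) (Bits n) ℂ →ₗ[ℝ] ℂ where
  toFun M := (M *ᵥ sVec n) x
  map_add' M N := by simp [Matrix.add_mulVec]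
  map_smul' r M := by simp [Matrix.smul_mulVec]

lemma entry_hasDerivAt {M M' : ℝ → Matrix (Bits n) (Bits n) ℂ} {t : ℝ}
    (h : HasDerivAt M (M' t) t) (x : Bits n) :
    HasDerivAt (fun t => (M t *ᵥ sVec n) x) ((M' t *ᵥ sVec n) x) t :=
  ((entryL n x).toContinuousLinearMap.hasFDerivAt (x := M t)).comp_hasDerivAt t h

lemma hasDerivAt_psi (x : Bits n) (t : ℝ) :
    HasDerivAt (fun u => psi c ε u x) (psi1 c ε t x) t :=
  entry_hasDerivAt (hasDerivAt_Mf c ε t) x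

lemma hasDerivAt_psi1 (x : Bits n) (t : ℝ) :
    HasDerivAt (fun u => psi1 c ε u x) (psi2 c ε t x) t :=
  entry_hasDerivAt (hasDerivAt_M1 c ε t) x

/-! ### entry computations -/

lemma Xop_mulVec (j : Fin n) (w : Bits n → ℂ) (x : Bits n) :
    (Xop j *ᵥ w) x = w (flipBit j x) := by
  simp [Xop, Matrix.mulVec, dotProduct, ite_mul]

lemma Bop_mulVec (w : Bits n → ℂ) (x : Bits n) :
    (Bop n *ᵥ w) x = ∑ j : Fin n, w (flipBit j x) := by
  have h : (Bop n *ᵥ w) x = ∑ j : Fin n, (Xop j *ᵥ w) x := by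
    simp only [Bop, Matrix.mulVec, dotProduct, Matrix.sum_apply, Finset.sum_mul]
    rw [Finset.sum_comm]
  simp [h, Xop_mulVec]

lemma Cop_mulVec (w : Bits n → ℂ) (x : Bits n) :
    (Cop c *ᵥ w) x = (c x : ℂ) * w x := by
  simp [Cop, Matrix.mulVec_diagonal]

lemma Am_mulVec (w : Bits n → ℂ) (x : Bits n) :
    (Am n *ᵥ w) x = -Complex.I * ∑ j : Fin n, w (flipBit j x) := by
  simp [Am, Matrix.neg_mulVec, Matrix.smul_mulVec, Bop_mulVec]

lemma Dm_mulVec (w : Bits n → ℂ) (x : Bits n) :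
    (Dm c ε *ᵥ w) x = -(Complex.I * ε) * ((c x : ℂ) * w x) := by
  simp [Dm, Matrix.neg_mulVec, Matrix.smul_mulVec, Cop, Matrix.mulVec_diagonal]

lemma Mf_zero : Mf c ε 0 = 1 := by
  simp [Mf, NormedSpace.exp_zero]

lemma psi_zero : psi c ε 0 = sVec n := by
  simp [psi, Mf_zero, Matrix.one_mulVec]

lemma sVec_eq (x : Bits n) : sVec n x = ((rr n : ℝ) : ℂ) := rfl

lemma psi1_zero (x : Bits n) :
    psi1 c ε 0 x = -Complex.I * ((rr n * (n + ε * c x) : ℝ) : ℂ) := by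
  have h : psi1 c ε 0 x = (Am n *ᵥ sVec n) x + (Dm c ε *ᵥ sVec n) x := by
    simp [psi1, M1, Mf_zero, Matrix.add_mulVec]
  rw [h, Am_mulVec, Dm_mulVec]
  simp only [sVec, Finset.sum_const, Finset.card_univ, Fintype.card_fin, nsmul_eq_mul, rr]
  push_cast
  ring

lemma psi2_zero (x : Bits n) :
    psi2 c ε 0 x =
      ((-(rr n * ((n : ℝ) ^ 2 + 2 * ε * (∑ j : Fin n, c (flipBit j x)) + ε ^ 2 * (c x) ^ 2)) : ℝ) : ℂ) := by
  have h0 : psi2 c ε 0 x = (Am n *ᵥ psi1 c ε 0) x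
      + ((Am n *ᵥ (Dm c ε *ᵥ sVec n)) x + (Dm c ε *ᵥ (Dm c ε *ᵥ sVec n)) x) := by
    simp only [psi2, M2, M1, Mf_zero, mul_one, one_mul, Matrix.add_mulVec, Matrix.add_mul,
      Matrix.mul_add, ← Matrix.mulVec_mulVec, Pi.add_apply, psi1, Matrix.mulVec_add]
  rw [h0, Am_mulVec, Am_mulVec, Dm_mulVec, Dm_mulVec]
  have hs : ∀ y : Bits n, (Dm c ε *ᵥ sVec n) y
      = -(Complex.I * ε) * ((c y : ℂ) * ((rr n : ℝ) : ℂ)) := by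
    intro y; rw [Dm_mulVec]; rfl
  simp only [psi1_zero, hs, sVec]
  rw [show (((Real.sqrt (2 ^ n))⁻¹ : ℝ) : ℂ) = ((rr n : ℝ) : ℂ) from rfl]
  push_cast [Finset.mul_sum, Finset.sum_add_distrib, Finset.sum_const, Finset.card_univ,
    Fintype.card_fin]
  ring_nf
  simp only [Complex.I_sq]
  simp only [Finset.sum_sub_distrib, Finset.sum_neg_distrib, Finset.sum_const,
    Finset.card_univ, Fintype.card_fin, nsmul_eq_mul, ← Finset.sum_mul, ← Finset.mul_sum]
  rw [Finset.sum_add_distrib, ← Finset.mul_sum, Finset.sum_const, Finset.card_univ]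
  simp only [Fintype.card_fin, nsmul_eq_mul]
  rw [← Finset.mul_sum]
  ring

/-! ### the expectation as a function of one parameter -/

def Ff (t : ℝ) : ℝ := ∑ x : Bits n, c x * Complex.normSq (psi c ε t x)

def F1f (t : ℝ) : ℝ := ∑ x : Bits n, c x *
  (((starRingEnd ℂ) (psi1 c ε t x) * psi c ε t x).re
    + ((starRingEnd ℂ) (psi c ε t x) * psi1 c ε t x).re)

def Sder : ℝ := ∑ x : Bits n, c x *
  ((((starRingEnd ℂ) (psi2 c ε 0 x) * psi c ε 0 x).re
      + ((starRingEnd ℂ) (psi1 c ε 0 x) * psi1 c ε 0 x).re)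
    + (((starRingEnd ℂ) (psi1 c ε 0 x) * psi1 c ε 0 x).re
      + ((starRingEnd ℂ) (psi c ε 0 x) * psi2 c ε 0 x).re))

lemma hasDerivAt_Ff (t : ℝ) : HasDerivAt (Ff c ε) (F1f c ε t) t := by
  have hrw : Ff c ε = fun t => ∑ x : Bits n,
      c x * ((starRingEnd ℂ) (psi c ε t x) * psi c ε t x).re := by
    funext u
    refine Finset.sum_congr rfl fun x _ => ?_
    simp [Complex.mul_re, Complex.normSq_apply]
  rw [hrw]
  apply HasDerivAt.fun_sum
  intro x _
  exact (hasDerivAt_re_conj_mul (hasDerivAt_psi c ε x t) (hasDerivAt_psi c ε x t)).const_mul (c x)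

lemma hasDerivAt_F1f : HasDerivAt (F1f c ε) (Sder c ε) 0 := by
  apply HasDerivAt.fun_sum
  intro x _
  exact ((hasDerivAt_re_conj_mul (hasDerivAt_psi1 c ε x 0) (hasDerivAt_psi c ε x 0)).add
    (hasDerivAt_re_conj_mul (hasDerivAt_psi c ε x 0) (hasDerivAt_psi1 c ε x 0))).const_mul (c x)

lemma F1f_zero : F1f c ε 0 = 0 := by
  unfold F1f
  refine Finset.sum_eq_zero fun x _ => ?_
  rw [psi_zero, sVec_eq, psi1_zero, re_helper3, re_helper4]
  ring

lemma rr_sq : rr n * rr n = ((2 : ℝ) ^ n)⁻¹ := by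
  rw [rr, ← mul_inv, Real.mul_self_sqrt (by positivity)]

lemma rr_pos : 0 < rr n := by
  rw [rr]
  exact inv_pos.2 (Real.sqrt_pos.2 (by positivity))

lemma Ff_zero : Ff c ε 0 = (1 / 2 ^ n) * ∑ x : Bits n, c x := by
  unfold Ff
  rw [Finset.mul_sum]
  refine Finset.sum_congr rfl fun x _ => ?_
  rw [psi_zero, sVec_eq, Complex.normSq_ofReal, rr_sq]
  rw [one_div]
  ring

lemma Sder_eq : Sder c ε
    = 2 * ε * (rr n * rr n) * ∑ x : Bits n, ∑ j : Fin n, (pd c j x) ^ 2 := by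
  have hterm : ∀ x : Bits n, c x *
      ((((starRingEnd ℂ) (psi2 c ε 0 x) * psi c ε 0 x).re
          + ((starRingEnd ℂ) (psi1 c ε 0 x) * psi1 c ε 0 x).re)
        + (((starRingEnd ℂ) (psi1 c ε 0 x) * psi1 c ε 0 x).re
          + ((starRingEnd ℂ) (psi c ε 0 x) * psi2 c ε 0 x).re))
      = 4 * ε * (rr n * rr n) * ((n : ℝ) * (c x) ^ 2
          - c x * ∑ j : Fin n, c (flipBit j x)) := by
    intro x
    rw [psi_zero, sVec_eq, psi1_zero, psi2_zero, re_helper1, re_helper2, re_helper2]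
    ring
  have hexp : ∀ x : Bits n, ∑ j : Fin n, (pd c j x) ^ 2
      = (∑ j : Fin n, (c (flipBit j x)) ^ 2)
        - 2 * (c x * ∑ j : Fin n, c (flipBit j x)) + (n : ℝ) * (c x) ^ 2 := by
    intro x
    have h1 : ∀ j : Fin n, (pd c j x) ^ 2
        = ((c (flipBit j x)) ^ 2 + (c x) ^ 2) - 2 * (c x * c (flipBit j x)) := by
      intro j; rw [pd]; ring
    rw [Finset.sum_congr rfl (fun j _ => h1 j), Finset.sum_sub_distrib,
      Finset.sum_add_distrib, ← Finset.mul_sum, ← Finset.mul_sum, Finset.sum_const,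
      Finset.card_univ, Fintype.card_fin, nsmul_eq_mul]
    ring
  have hswap : ∑ x : Bits n, ∑ j : Fin n, (c (flipBit j x)) ^ 2
      = (n : ℝ) * ∑ x : Bits n, (c x) ^ 2 := by
    rw [Finset.sum_comm]
    have hb : ∀ j : Fin n, ∑ x : Bits n, (c (flipBit j x)) ^ 2 = ∑ x : Bits n, (c x) ^ 2 :=
      fun j => Fintype.sum_bijective (flipBit j)
        (Function.Involutive.bijective (flipBit_flipBit j)) _ _ (fun x => rfl)
    simp only [hb, Finset.sum_const, Finset.card_univ, Fintype.card_fin, nsmul_eq_mul]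
  have hR : ∑ x : Bits n, ∑ j : Fin n, (pd c j x) ^ 2
      = 2 * ((n : ℝ) * ∑ x : Bits n, (c x) ^ 2)
        - 2 * (∑ x : Bits n, c x * ∑ j : Fin n, c (flipBit j x)) := by
    rw [Finset.sum_congr rfl (fun x _ => hexp x), Finset.sum_add_distrib,
      Finset.sum_sub_distrib, ← Finset.mul_sum, ← Finset.mul_sum, hswap]
    ring
  unfold Sder
  rw [Finset.sum_congr rfl (fun x _ => hterm x), ← Finset.mul_sum, Finset.sum_sub_distrib,
    ← Finset.mul_sum, hR]
  ring

/-! ### calculus conclusion -/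

lemma exists_gt_of_deriv {F F1 : ℝ → ℝ} {m : ℝ}
    (hF : ∀ t, HasDerivAt F (F1 t) t) (h0 : F1 0 = 0)
    (hm : HasDerivAt F1 m 0) (hmpos : 0 < m) : ∃ t : ℝ, F 0 < F t := by
  rw [hasDerivAt_iff_tendsto_slope] at hm
  have h2 : Filter.Tendsto (slope F1 0) (nhdsWithin 0 (Set.Ioi 0)) (nhds m) :=
    hm.mono_left (nhdsWithin_mono 0 (fun t ht => ne_of_gt ht))
  have h3 : ∀ᶠ t in nhdsWithin 0 (Set.Ioi 0), 0 < slope F1 0 t :=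
    h2.eventually (eventually_gt_nhds hmpos)
  obtain ⟨δ, hδ, hsub⟩ := mem_nhdsGT_iff_exists_Ioc_subset.1 h3
  have hδ0 : (0:ℝ) < δ := hδ
  have hpos : ∀ t ∈ Set.Ioo (0:ℝ) δ, 0 < F1 t := by
    intro t ht
    have hmem : 0 < slope F1 0 t := hsub ⟨ht.1, le_of_lt ht.2⟩
    have hslope : slope F1 0 t = F1 t / t := by
      rw [slope_def_field, h0, sub_zero, sub_zero]
    rw [hslope] at hmem
    have hmul := mul_pos hmem ht.1
    rwa [div_mul_cancel₀ _ (ne_of_gt ht.1)] at hmul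
  have hmono : StrictMonoOn F (Set.Icc 0 δ) := by
    apply strictMonoOn_of_deriv_pos (convex_Icc 0 δ)
    · exact fun t _ => (hF t).continuousAt.continuousWithinAt
    · intro t ht
      rw [interior_Icc] at ht
      rw [(hF t).deriv]
      exact hpos t ht
  exact ⟨δ, hmono ⟨le_refl 0, le_of_lt hδ0⟩ ⟨le_of_lt hδ0, le_refl δ⟩ hδ0⟩

/-! ### bridge to `expC1` -/

lemma Qaoa1_eq (t : ℝ) : Qaoa1 c (ε * t) t = Mf c ε t := by
  unfold Qaoa1 Mf
  congr 1
  · congr 1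
    ext x y
    simp only [Am, Matrix.smul_apply, smul_eq_mul, Complex.real_smul]
    ring
  · congr 1
    ext x y
    simp only [Dm, Matrix.smul_apply, smul_eq_mul, Complex.real_smul]
    push_cast
    ring

lemma expC1_eq_Ff (t : ℝ) : expC1 c (ε * t) t = Ff c ε t := by
  unfold expC1 Ff psi
  rw [Qaoa1_eq]
  rw [dotProduct, Complex.re_sum]
  refine Finset.sum_congr rfl fun x _ => ?_
  rw [Pi.star_apply, Cop_mulVec]
  simp only [Complex.star_def, Complex.mul_re, Complex.normSq_apply, Complex.conj_re,
    Complex.conj_im, Complex.ofReal_re, Complex.ofReal_im, Complex.mul_im]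
  ring

end QP

theorem stmt19 (n : ℕ) (hn : 1 ≤ n) (c : Bits n → ℝ) (hc : ∃ x y : Bits n, c x ≠ c y) :
    (∃ γ β : ℝ, expC1 c γ β > (1 / 2 ^ n) * ∑ x : Bits n, c x) ∧
    (∃ γ β : ℝ, expC1 c γ β < (1 / 2 ^ n) * ∑ x : Bits n, c x) := by
  have hr := QP.rr_pos (n := n)
  have hS := QP.S_pos c hc
  constructor
  · have hm : 0 < QP.Sder c 1 := by
      rw [QP.Sder_eq]
      nlinarith [mul_pos (mul_pos hr hr) hS]
    obtain ⟨t, ht⟩ := QP.exists_gt_of_deriv (QP.hasDerivAt_Ff c 1) (QP.F1f_zero c 1)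
      (QP.hasDerivAt_F1f c 1) hm
    refine ⟨1 * t, t, ?_⟩
    rw [QP.expC1_eq_Ff c 1 t]
    calc (1 / 2 ^ n) * ∑ x : Bits n, c x = QP.Ff c 1 0 := (QP.Ff_zero c 1).symm
      _ < QP.Ff c 1 t := ht
  · have hm : 0 < -QP.Sder c (-1) := by
      rw [QP.Sder_eq]
      nlinarith [mul_pos (mul_pos hr hr) hS]
    have hF : ∀ u, HasDerivAt (fun v => -QP.Ff c (-1) v) (-QP.F1f c (-1) u) u :=
      fun u => (QP.hasDerivAt_Ff c (-1) u).neg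
    have h0 : -QP.F1f c (-1) 0 = 0 := by rw [QP.F1f_zero]; ring
    have hm' : HasDerivAt (fun u => -QP.F1f c (-1) u) (-QP.Sder c (-1)) 0 :=
      (QP.hasDerivAt_F1f c (-1)).neg
    obtain ⟨t, ht⟩ := QP.exists_gt_of_deriv hF h0 hm' hm
    refine ⟨(-1) * t, t, ?_⟩
    rw [QP.expC1_eq_Ff c (-1) t]
    have hF0 : QP.Ff c (-1) 0 = (1 / 2 ^ n) * ∑ x : Bits n, c x := QP.Ff_zero c (-1)
    linarith [ht]
end
end
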